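/- Let G be a labeled multi-relational graph on vertex set [n] with adjacency matrices A_1, ..., A_r, and let F ∈ ℝ^{n×d} be row-independent modulo equality whose rows, viewed as a coloring, equal some coloring C. Then there exist matrices W_0, W_1 ∈ ℝ^{d×e} and scalars α_1, ..., α_r ∈ ℝ such that F' = sign(F W_0 + Σ_{i∈[r]} α_i A_i F W_1 − J) is row-independent modulo equality, and rows v, w of F' are equal if and only if vertices v and w receive the same color under one refinement step of the multi-relational 1-WL applied to C. -/

import Mathlib

/-- Strong multi-relational 1-WL message. -/
def rwlMsg {V : Type*} {r : ℕ} (N : Fin r → V → Finset V)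
    (c : V → ℕ) (v : V) : Multiset (ℕ × ℕ) :=
  ∑ i : Fin r, (N i v).val.map (fun u => (c u, (i : ℕ)))

/-- The sign function of the paper: `sign x = 1` if `x > 0` and `-1` if `x ≤ 0`. -/
noncomputable def sgn (x : ℝ) : ℝ := if 0 < x then 1 else -1

/-- A matrix is row-independent modulo equality if its set of distinct rows is a
linearly independent family of vectors. -/
def RowIndepModEq {n e : ℕ} (F : Matrix (Fin n) (Fin e) ℝ) : Prop :=
  LinearIndependent ℝ ((↑) : (Set.range fun v => F v) → (Fin e → ℝ))

private lemma digitsUnique (b : ℕ) (hb : 2 ≤ b) :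
    ∀ (P : ℕ) (d e : ℕ → ℕ), (∀ p, d p < b) → (∀ p, e p < b) →
    (∑ p ∈ Finset.range P, d p * b ^ p) = (∑ p ∈ Finset.range P, e p * b ^ p) →
    ∀ p < P, d p = e p := by
  intro P
  induction P with
  | zero => intro d e _ _ _ p hp; omega
  | succ P ih =>
    intro d e hd he hsum p hp
    have expand : ∀ f : ℕ → ℕ, (∑ p ∈ Finset.range (P+1), f p * b ^ p)
        = b * (∑ p ∈ Finset.range P, f (p+1) * b ^ p) + f 0 := by
      intro f
      rw [Finset.sum_range_succ']
      simp only [pow_zero, mul_one, Finset.mul_sum]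
      congr 1
      refine Finset.sum_congr rfl fun q _ => ?_
      rw [pow_succ]; ring
    rw [expand d, expand e] at hsum
    have hb0 : 0 < b := by omega
    have h0 : d 0 = e 0 := by
      have h1 := congrArg (· % b) hsum
      simpa [Nat.mul_add_mod, Nat.mod_eq_of_lt (hd 0), Nat.mod_eq_of_lt (he 0)] using h1
    have hA : (∑ p ∈ Finset.range P, d (p+1) * b ^ p) = ∑ p ∈ Finset.range P, e (p+1) * b ^ p := by
      have h1 := congrArg (· / b) hsum
      simpa [Nat.mul_add_div hb0, Nat.div_eq_of_lt (hd 0), Nat.div_eq_of_lt (he 0)] using h1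
    match p, hp with
    | 0, _ => exact h0
    | (q+1), hq => exact ih (fun p => d (p+1)) (fun p => e (p+1)) (fun p => hd _) (fun p => he _) hA q (by omega)

private lemma posInj {n : ℕ} {i i' k k' : ℕ} (hk : k < n) (hk' : k' < n)
    (h : n * (i+1) + k = n * (i'+1) + k') : i = i' ∧ k = k' := by
  have hn : 0 < n := by omega
  have h1 : (n*(i+1)+k)/n = i+1 := by rw [Nat.mul_add_div hn, Nat.div_eq_of_lt hk, add_zero]
  have h2 : (n*(i'+1)+k')/n = i'+1 := by rw [Nat.mul_add_div hn, Nat.div_eq_of_lt hk', add_zero]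
  rw [h] at h1
  have hii : i = i' := by omega
  subst hii
  exact ⟨rfl, Nat.add_left_cancel h⟩

private def cI {n : ℕ} (Ccol : Fin n → ℕ) (v : Fin n) : ℕ :=
  ((Finset.univ.image Ccol).filter (fun k => k < Ccol v)).card

private lemma cI_lt {n : ℕ} (Ccol : Fin n → ℕ) (v : Fin n) : cI Ccol v < n := by
  have h1 : ((Finset.univ.image Ccol).filter (fun k => k < Ccol v)) ⊂ (Finset.univ.image Ccol) := by
    refine Finset.filter_ssubset.mpr ?_
    exact ⟨Ccol v, Finset.mem_image_of_mem _ (Finset.mem_univ v), lt_irrefl _⟩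
  have h2 := Finset.card_lt_card h1
  have h3 : (Finset.univ.image Ccol).card ≤ n := by
    simpa using Finset.card_image_le (s := (Finset.univ : Finset (Fin n))) (f := Ccol)
  unfold cI; omega

private lemma cI_mono {n : ℕ} (Ccol : Fin n → ℕ) {v w : Fin n} (h : Ccol v < Ccol w) :
    cI Ccol v < cI Ccol w := by
  apply Finset.card_lt_card
  have hsub : ((Finset.univ.image Ccol).filter (fun k => k < Ccol v))
      ⊆ ((Finset.univ.image Ccol).filter (fun k => k < Ccol w)) := by
    intro k hk
    simp only [Finset.mem_filter] at *
    exact ⟨hk.1, lt_trans hk.2 h⟩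
  refine (Finset.ssubset_iff_of_subset hsub).mpr ?_
  refine ⟨Ccol v, ?_, ?_⟩
  · simp only [Finset.mem_filter]
    exact ⟨Finset.mem_image_of_mem _ (Finset.mem_univ v), h⟩
  · simp

private lemma cI_iff {n : ℕ} (Ccol : Fin n → ℕ) (v w : Fin n) :
    cI Ccol v = cI Ccol w ↔ Ccol v = Ccol w := by
  constructor
  · intro h
    by_contra hne
    rcases lt_or_gt_of_ne hne with h' | h'
    · have := cI_mono Ccol h'; omega
    · have := cI_mono Ccol h'; omega
  · intro h; unfold cI; rw [h]

private def sV {n r : ℕ} (N : Fin r → Fin n → Finset (Fin n)) (Ccol : Fin n → ℕ) (v : Fin n) : ℕ :=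
  (n+2) ^ (n*(r+1) + cI Ccol v)
    + ∑ i : Fin r, ∑ u ∈ N i v, (n+2) ^ (n*((i:ℕ)+1) + cI Ccol u)

private def dgV {n r : ℕ} (N : Fin r → Fin n → Finset (Fin n)) (Ccol : Fin n → ℕ) (v : Fin n) (p : ℕ) : ℕ :=
  (if p = n*(r+1) + cI Ccol v then 1 else 0)
    + ∑ i : Fin r, ((N i v).filter (fun u => n*((i:ℕ)+1) + cI Ccol u = p)).card

private lemma pos_ne_colorpos {n r : ℕ} {i k k' : ℕ} (hi : i < r) (hk : k < n) :
    n*(i+1) + k ≠ n*(r+1) + k' := by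
  intro h
  have h1 : n*(i+1) + k < n*(i+2) := by rw [show n*(i+2) = n*(i+1) + n by ring]; omega
  have h2 : n*(i+2) ≤ n*(r+1) := Nat.mul_le_mul le_rfl (by omega)
  omega

private lemma pos_lt_P {n r : ℕ} {i k : ℕ} (hi : i < r) (hk : k < n) :
    n*(i+1) + k < n*(r+2) := by
  have h1 : n*(i+1) + k < n*(i+2) := by rw [show n*(i+2) = n*(i+1) + n by ring]; omega
  have h2 : n*(i+2) ≤ n*(r+2) := Nat.mul_le_mul le_rfl (by omega)
  omega

private lemma colorpos_lt_P {n r : ℕ} {k : ℕ} (hk : k < n) :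
    n*(r+1) + k < n*(r+2) := by
  rw [show n*(r+2) = n*(r+1) + n by ring]; omega

private lemma dgV_lt {n r : ℕ} (N : Fin r → Fin n → Finset (Fin n)) (Ccol : Fin n → ℕ)
    (v : Fin n) (p : ℕ) : dgV N Ccol v p < n + 2 := by
  unfold dgV
  have hind : (if p = n*(r+1) + cI Ccol v then 1 else 0) ≤ 1 := by split <;> omega
  have hsum : (∑ i : Fin r, ((N i v).filter (fun u => n*((i:ℕ)+1) + cI Ccol u = p)).card) ≤ n := by
    by_cases hex : ∃ i : Fin r, ((N i v).filter (fun u => n*((i:ℕ)+1) + cI Ccol u = p)).card ≠ 0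
    · obtain ⟨i0, hi0⟩ := hex
      rw [Finset.sum_eq_single i0]
      · exact le_trans (Finset.card_filter_le _ _) (by simpa using Finset.card_le_univ (N i0 v))
      · intro i _ hne
        rw [Finset.card_eq_zero, Finset.filter_eq_empty_iff]
        intro u _ hu
        rw [Finset.card_ne_zero, Finset.filter_nonempty_iff] at hi0
        obtain ⟨u0, _, hu0⟩ := hi0
        have := posInj (cI_lt Ccol u) (cI_lt Ccol u0) (hu.trans hu0.symm)
        exact hne (Fin.ext this.1)
      · intro h; exact absurd (Finset.mem_univ i0) h
    · push_neg at hex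
      rw [Finset.sum_eq_zero (fun i _ => hex i)]; omega
  omega

private lemma sV_digits {n r : ℕ} (N : Fin r → Fin n → Finset (Fin n)) (Ccol : Fin n → ℕ)
    (v : Fin n) : sV N Ccol v = ∑ p ∈ Finset.range (n*(r+2)), dgV N Ccol v p * (n+2) ^ p := by
  unfold sV dgV
  simp only [add_mul, Finset.sum_add_distrib]
  congr 1
  · rw [Finset.sum_congr rfl (fun p _ => by rw [ite_mul, one_mul, zero_mul]),
      Finset.sum_ite_eq' (Finset.range (n*(r+2))) (n*(r+1) + cI Ccol v) (fun p => (n+2)^p),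
      if_pos (Finset.mem_range.mpr (colorpos_lt_P (cI_lt Ccol v)))]
  · rw [Finset.sum_congr rfl (fun p _ => Finset.sum_mul ..), Finset.sum_comm]
    refine Finset.sum_congr rfl fun i _ => ?_
    rw [← Finset.sum_fiberwise_of_maps_to
      (g := fun u => n*((i:ℕ)+1) + cI Ccol u)
      (t := Finset.range (n*(r+2)))
      (fun u _ => Finset.mem_range.mpr (pos_lt_P i.isLt (cI_lt Ccol u)))
      (fun u => (n+2) ^ (n*((i:ℕ)+1) + cI Ccol u))]
    refine Finset.sum_congr rfl fun p _ => ?_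
    rw [Finset.sum_congr rfl (fun u hu => by
      rw [(Finset.mem_filter.mp hu).2]), Finset.sum_const, smul_eq_mul]

private lemma sV_eq_iff {n r : ℕ} (N : Fin r → Fin n → Finset (Fin n)) (Ccol : Fin n → ℕ)
    (v w : Fin n) :
    sV N Ccol v = sV N Ccol w ↔
      (cI Ccol v = cI Ccol w ∧ ∀ (i : Fin r) (k : ℕ),
        ((N i v).filter (fun u => cI Ccol u = k)).card
          = ((N i w).filter (fun u => cI Ccol u = k)).card) := by
  constructor
  · intro hs
    have hD : ∀ p < n*(r+2), dgV N Ccol v p = dgV N Ccol w p := by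
      refine digitsUnique (n+2) (by omega) (n*(r+2)) _ _ (dgV_lt N Ccol v) (dgV_lt N Ccol w) ?_
      rw [← sV_digits, ← sV_digits, hs]
    have hzero : ∀ (x : Fin n) (k' : ℕ),
        (∑ i : Fin r, ((N i x).filter (fun u => n*((i:ℕ)+1) + cI Ccol u = n*(r+1) + k')).card) = 0 := by
      intro x k'
      refine Finset.sum_eq_zero fun i _ => ?_
      rw [Finset.card_eq_zero, Finset.filter_eq_empty_iff]
      intro u _ hu
      exact pos_ne_colorpos i.isLt (cI_lt Ccol u) hu
    constructor
    · have h1 := hD (n*(r+1) + cI Ccol v) (colorpos_lt_P (cI_lt Ccol v))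
      unfold dgV at h1
      rw [hzero v, hzero w, if_pos rfl] at h1
      by_cases h : n*(r+1) + cI Ccol v = n*(r+1) + cI Ccol w
      · exact Nat.add_left_cancel h
      · rw [if_neg h] at h1; omega
    · intro i k
      by_cases hk : k < n
      · have hcompute : ∀ x : Fin n, dgV N Ccol x (n*((i:ℕ)+1)+k)
            = ((N i x).filter (fun u => cI Ccol u = k)).card := by
          intro x
          unfold dgV
          rw [if_neg (pos_ne_colorpos i.isLt hk), zero_add, Finset.sum_eq_single i]
          · congr 1
            refine Finset.filter_congr fun u _ => ?_
            exact ⟨fun h => Nat.add_left_cancel h, fun h => by rw [h]⟩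
          · intro j _ hne
            rw [Finset.card_eq_zero, Finset.filter_eq_empty_iff]
            intro u _ hu
            exact hne (Fin.ext (posInj (cI_lt Ccol u) hk hu).1)
          · intro h; exact absurd (Finset.mem_univ i) h
        have := hD (n*((i:ℕ)+1)+k) (pos_lt_P i.isLt hk)
        rwa [hcompute v, hcompute w] at this
      · have hemp : ∀ (x : Fin n), (N i x).filter (fun u => cI Ccol u = k) = ∅ := by
          intro x
          rw [Finset.filter_eq_empty_iff]
          intro u _ hu
          have := cI_lt Ccol u
          omega
        rw [hemp v, hemp w]
  · intro h
    have hgroup : ∀ (x : Fin n) (i : Fin r),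
        (∑ u ∈ N i x, (n+2)^(n*((i:ℕ)+1)+cI Ccol u))
          = ∑ k ∈ Finset.range n, ((N i x).filter (fun u => cI Ccol u = k)).card * (n+2)^(n*((i:ℕ)+1)+k) := by
      intro x i
      rw [← Finset.sum_fiberwise_of_maps_to (g := fun u => cI Ccol u)
        (fun u _ => Finset.mem_range.mpr (cI_lt Ccol u))
        (fun u => (n+2)^(n*((i:ℕ)+1)+cI Ccol u))]
      refine Finset.sum_congr rfl fun k _ => ?_
      rw [Finset.sum_congr rfl (fun u hu => by rw [(Finset.mem_filter.mp hu).2]),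
        Finset.sum_const, smul_eq_mul]
    unfold sV
    rw [h.1]
    congr 1
    refine Finset.sum_congr rfl fun i _ => ?_
    rw [hgroup v i, hgroup w i]
    exact Finset.sum_congr rfl fun k _ => by rw [h.2 i k]

private lemma count_bridge {n r : ℕ} (N : Fin r → Fin n → Finset (Fin n)) (Ccol : Fin n → ℕ)
    (v w : Fin n) :
    (∀ (i : Fin r) (k : ℕ),
        ((N i v).filter (fun u => cI Ccol u = k)).card
          = ((N i w).filter (fun u => cI Ccol u = k)).card) ↔
    (∀ (i : Fin r) (k : ℕ),
        ((N i v).filter (fun u => Ccol u = k)).card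
          = ((N i w).filter (fun u => Ccol u = k)).card) := by
  constructor
  · intro h i k
    by_cases hex : ∃ u : Fin n, (u ∈ N i v ∨ u ∈ N i w) ∧ Ccol u = k
    · obtain ⟨u0, _, hk0⟩ := hex
      have e : ∀ x : Fin n, (N i x).filter (fun u => Ccol u = k)
          = (N i x).filter (fun u => cI Ccol u = cI Ccol u0) := by
        intro x
        refine Finset.filter_congr fun u _ => ?_
        rw [← hk0, ← cI_iff Ccol u u0]
      rw [e v, e w, h i (cI Ccol u0)]
    · push_neg at hex
      rw [Finset.filter_eq_empty_iff.mpr (fun u hu => hex u (Or.inl hu)),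
        Finset.filter_eq_empty_iff.mpr (fun u hu => hex u (Or.inr hu))]
  · intro h i k
    by_cases hex : ∃ u : Fin n, (u ∈ N i v ∨ u ∈ N i w) ∧ cI Ccol u = k
    · obtain ⟨u0, _, hk0⟩ := hex
      have e : ∀ x : Fin n, (N i x).filter (fun u => cI Ccol u = k)
          = (N i x).filter (fun u => Ccol u = Ccol u0) := by
        intro x
        refine Finset.filter_congr fun u _ => ?_
        rw [← hk0, cI_iff Ccol u u0]
      rw [e v, e w, h i (Ccol u0)]
    · push_neg at hex
      rw [Finset.filter_eq_empty_iff.mpr (fun u hu => hex u (Or.inl hu)),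
        Finset.filter_eq_empty_iff.mpr (fun u hu => hex u (Or.inr hu))]

private lemma msg_iff {n r : ℕ} (N : Fin r → Fin n → Finset (Fin n)) (Ccol : Fin n → ℕ)
    (v w : Fin n) :
    rwlMsg N Ccol v = rwlMsg N Ccol w ↔
    (∀ (i : Fin r) (k : ℕ),
        ((N i v).filter (fun u => Ccol u = k)).card
          = ((N i w).filter (fun u => Ccol u = k)).card) := by
  have hcnt : ∀ (x : Fin n) (a : ℕ × ℕ),
      Multiset.count a (rwlMsg N Ccol x)
        = ∑ j : Fin r, ((N j x).filter (fun u => a = (Ccol u, (j:ℕ)))).card := by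
    intro x a
    unfold rwlMsg
    rw [Multiset.count_sum']
    refine Finset.sum_congr rfl fun j _ => ?_
    rw [Multiset.count_map]
    rw [← Finset.filter_val]
    rfl
  rw [Multiset.ext]
  constructor
  · intro h i k
    have h1 := h (k, (i : ℕ))
    rw [hcnt v, hcnt w] at h1
    have hred : ∀ x : Fin n,
        (∑ j : Fin r, ((N j x).filter (fun u => ((k, (i:ℕ)) : ℕ × ℕ) = (Ccol u, (j:ℕ)))).card)
          = ((N i x).filter (fun u => Ccol u = k)).card := by
      intro x
      rw [Finset.sum_eq_single i]
      · congr 1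
        refine Finset.filter_congr fun u _ => ?_
        simp [Prod.ext_iff, eq_comm]
      · intro j _ hne
        rw [Finset.card_eq_zero, Finset.filter_eq_empty_iff]
        intro u _ hu
        rw [Prod.ext_iff] at hu
        exact hne (Fin.ext hu.2.symm)
      · intro hmem; exact absurd (Finset.mem_univ i) hmem
    rw [hred v, hred w] at h1
    exact h1
  · intro h a
    rw [hcnt v, hcnt w]
    refine Finset.sum_congr rfl fun j _ => ?_
    by_cases ha : a.2 = (j : ℕ)
    · have e : ∀ x : Fin n, (N j x).filter (fun u => a = (Ccol u, (j:ℕ)))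
          = (N j x).filter (fun u => Ccol u = a.1) := by
        intro x
        refine Finset.filter_congr fun u _ => ?_
        rw [Prod.ext_iff]
        constructor
        · intro hh; exact hh.1.symm
        · intro hh; exact ⟨hh.symm, ha⟩
      rw [e v, e w, h j a.1]
    · rw [Finset.filter_eq_empty_iff.mpr (fun u _ => fun hu => ha (by rw [hu])),
        Finset.filter_eq_empty_iff.mpr (fun u _ => fun hu => ha (by rw [hu]))]

private lemma lin_eval {d : ℕ} (φ : (Fin d → ℝ) →ₗ[ℝ] ℝ) (x : Fin d → ℝ) :
    (∑ k : Fin d, x k * φ (Pi.single k 1)) = φ x := by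
  conv_rhs => rw [pi_eq_sum_univ x]
  rw [map_sum]
  refine Finset.sum_congr rfl fun k _ => ?_
  rw [map_smul, smul_eq_mul]
  have : (Pi.single k 1 : Fin d → ℝ) = fun j => if k = j then 1 else 0 := by
    funext j
    simp [Pi.single_apply, eq_comm]
  rw [this]

private lemma exists_dual {n d : ℕ} (F : Matrix (Fin n) (Fin d) ℝ)
    (hF : RowIndepModEq F) (t : (Fin d → ℝ) → ℝ) :
    ∃ φ : (Fin d → ℝ) →ₗ[ℝ] ℝ, ∀ v : Fin n, φ (F v) = t (F v) := by
  classical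
  have hF' : LinearIndepOn ℝ id (Set.range fun v => F v) := hF
  let B := Module.Basis.extend hF'
  refine ⟨B.constr ℝ (fun y => t (y : Fin d → ℝ)), fun v => ?_⟩
  have hmem : F v ∈ hF'.extend (Set.subset_univ _) :=
    Module.Basis.subset_extend hF' ⟨v, rfl⟩
  have hBv : (B ⟨F v, hmem⟩ : Fin d → ℝ) = F v := Module.Basis.extend_apply_self hF' ⟨F v, hmem⟩
  calc (B.constr ℝ (fun y => t (y : Fin d → ℝ))) (F v)
      = (B.constr ℝ (fun y => t (y : Fin d → ℝ))) (B ⟨F v, hmem⟩) := by rw [hBv]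
    _ = t (F v) := by rw [Module.Basis.constr_basis]

theorem compgcn_simulates_rwl_step {n d r : ℕ}
    (N : Fin r → Fin n → Finset (Fin n))
    (A : Fin r → Matrix (Fin n) (Fin n) ℝ)
    (hA : ∀ i v w, A i v w = if w ∈ N i v then 1 else 0)
    (F : Matrix (Fin n) (Fin d) ℝ)
    (hF : RowIndepModEq F)
    (Ccol : Fin n → ℕ)
    (hFC : ∀ v w, F v = F w ↔ Ccol v = Ccol w) :
    ∃ (e : ℕ) (W0 W1 : Matrix (Fin d) (Fin e) ℝ) (α : Fin r → ℝ)
      (F' : Matrix (Fin n) (Fin e) ℝ),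
      F' = (Matrix.of fun v j =>
        sgn ((F * W0 + ∑ i : Fin r, α i • (A i * (F * W1))) v j - 1)) ∧
      RowIndepModEq F' ∧
      ∀ v w : Fin n, (F' v = F' w ↔
        (Ccol v = Ccol w ∧ rwlMsg N Ccol v = rwlMsg N Ccol w)) := by
  classical
  -- the scalar encodings
  obtain ⟨φ0, hφ0⟩ := exists_dual F hF
    (fun x => if h : ∃ v, F v = x then ((n:ℝ)+2) ^ (n*(r+1) + cI Ccol h.choose) else 0)
  obtain ⟨φ1, hφ1⟩ := exists_dual F hF
    (fun x => if h : ∃ v, F v = x then ((n:ℝ)+2) ^ (n + cI Ccol h.choose) else 0)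
  have hval0 : ∀ v, φ0 (F v) = ((n:ℝ)+2) ^ (n*(r+1) + cI Ccol v) := by
    intro v
    rw [hφ0 v, dif_pos (⟨v, rfl⟩ : ∃ w, F w = F v)]
    have hcc : cI Ccol (Exists.choose (⟨v, rfl⟩ : ∃ w, F w = F v)) = cI Ccol v :=
      (cI_iff Ccol _ v).mpr ((hFC _ v).mp (Exists.choose_spec (⟨v, rfl⟩ : ∃ w, F w = F v)))
    rw [hcc]
  have hval1 : ∀ v, φ1 (F v) = ((n:ℝ)+2) ^ (n + cI Ccol v) := by
    intro v
    rw [hφ1 v, dif_pos (⟨v, rfl⟩ : ∃ w, F w = F v)]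
    have hcc : cI Ccol (Exists.choose (⟨v, rfl⟩ : ∃ w, F w = F v)) = cI Ccol v :=
      (cI_iff Ccol _ v).mpr ((hFC _ v).mp (Exists.choose_spec (⟨v, rfl⟩ : ∃ w, F w = F v)))
    rw [hcc]
  -- scalar value per vertex, extended to ℕ
  set sn : ℕ → ℕ := fun m => if h : m < n then sV N Ccol ⟨m, h⟩ else 0 with hsndef
  have hsn : ∀ v : Fin n, sn v.val = sV N Ccol v := by
    intro v
    rw [hsndef]
    simp only [dif_pos v.isLt, Fin.eta]
  have hsV1 : ∀ v : Fin n, 1 ≤ sV N Ccol v := by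
    intro v
    have : 1 ≤ (n+2) ^ (n*(r+1) + cI Ccol v) := Nat.one_le_pow _ _ (by omega)
    unfold sV; omega
  -- thresholds
  set τ : Fin (2*n) → ℝ := fun j =>
    ((sn (j.val / 2) : ℕ) : ℝ) + (if j.val % 2 = 0 then -(1/2:ℝ) else (1/2:ℝ)) with hτdef
  have hτpos : ∀ j, 0 < τ j := by
    intro j
    have hlt : j.val / 2 < n := by have := j.isLt; omega
    have h1 : 1 ≤ sn (j.val / 2) := by
      rw [hsndef]; simpa only [dif_pos hlt] using hsV1 ⟨j.val / 2, hlt⟩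
    have h1R : (1:ℝ) ≤ ((sn (j.val / 2) : ℕ) : ℝ) := by exact_mod_cast h1
    rw [hτdef]
    dsimp only
    split <;> linarith
  set j0 : Fin n → Fin (2*n) := fun v => ⟨2*v.val, by have := v.isLt; omega⟩ with hj0def
  set j1 : Fin n → Fin (2*n) := fun v => ⟨2*v.val+1, by have := v.isLt; omega⟩ with hj1def
  have hτ0 : ∀ x v : Fin n, (τ (j0 v) < ((sV N Ccol x : ℕ):ℝ)) ↔ sV N Ccol v ≤ sV N Ccol x := by
    intro x v
    have hτval : τ (j0 v) = ((sV N Ccol v : ℕ):ℝ) - 1/2 := by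
      rw [hτdef]
      dsimp only
      rw [if_pos (show 2*(v:ℕ) % 2 = 0 by omega), (show 2*(v:ℕ)/2 = (v:ℕ) by omega), hsn v]
      ring
    rw [hτval]
    constructor
    · intro h
      by_contra hc
      have : sV N Ccol x + 1 ≤ sV N Ccol v := by omega
      have : ((sV N Ccol x : ℕ):ℝ) + 1 ≤ ((sV N Ccol v : ℕ):ℝ) := by exact_mod_cast this
      linarith
    · intro h
      have : ((sV N Ccol v : ℕ):ℝ) ≤ ((sV N Ccol x : ℕ):ℝ) := by exact_mod_cast h
      linarith
  have hτ1 : ∀ x v : Fin n, (τ (j1 v) < ((sV N Ccol x : ℕ):ℝ)) ↔ sV N Ccol v < sV N Ccol x := by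
    intro x v
    have hτval : τ (j1 v) = ((sV N Ccol v : ℕ):ℝ) + 1/2 := by
      rw [hτdef]
      dsimp only
      rw [if_neg (show ¬ (2*(v:ℕ)+1) % 2 = 0 by omega),
        (show (2*(v:ℕ)+1)/2 = (v:ℕ) by omega), hsn v]
    rw [hτval]
    constructor
    · intro h
      by_contra hc
      have : sV N Ccol x ≤ sV N Ccol v := by omega
      have : ((sV N Ccol x : ℕ):ℝ) ≤ ((sV N Ccol v : ℕ):ℝ) := by exact_mod_cast this
      linarith
    · intro h
      have : ((sV N Ccol v : ℕ):ℝ) + 1 ≤ ((sV N Ccol x : ℕ):ℝ) := by exact_mod_cast h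
      linarith
  -- the refined-coloring characterisation of the scalar
  have hrowiff : ∀ v w, sV N Ccol v = sV N Ccol w ↔
      (Ccol v = Ccol w ∧ rwlMsg N Ccol v = rwlMsg N Ccol w) := by
    intro v w
    rw [sV_eq_iff]
    exact and_congr (cI_iff Ccol v w)
      ((count_bridge N Ccol v w).trans (msg_iff N Ccol v w).symm)
  -- the key abstract step
  have key : ∀ (Fp : Matrix (Fin n) (Fin (2*n)) ℝ),
      (∀ v j, Fp v j = if τ j < ((sV N Ccol v : ℕ):ℝ) then 1 else -1) →
      RowIndepModEq Fp ∧ ∀ v w : Fin n, (Fp v = Fp w ↔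
        (Ccol v = Ccol w ∧ rwlMsg N Ccol v = rwlMsg N Ccol w)) := by
    intro Fp hent
    have hrows : ∀ v w : Fin n, Fp v = Fp w ↔ sV N Ccol v = sV N Ccol w := by
      intro v w
      constructor
      · intro h
        have h0 := congrFun h (j0 v)
        have h1 := congrFun h (j1 v)
        rw [hent v (j0 v), hent w (j0 v), if_pos ((hτ0 v v).mpr le_rfl)] at h0
        rw [hent v (j1 v), hent w (j1 v),
          if_neg (fun hc => absurd ((hτ1 v v).mp hc) (lt_irrefl _))] at h1
        have hle : sV N Ccol v ≤ sV N Ccol w := by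
          by_contra hc
          rw [if_neg (fun hcc => hc ((hτ0 w v).mp hcc))] at h0
          norm_num at h0
        have hge : ¬ sV N Ccol v < sV N Ccol w := by
          intro hc
          rw [if_pos ((hτ1 w v).mpr hc)] at h1
          norm_num at h1
        omega
      · intro h
        funext j
        rw [hent v j, hent w j, h]
    constructor
    · rw [RowIndepModEq, linearIndependent_iff']
      intro t g hsum x hx
      obtain ⟨v, hv⟩ := Set.mem_range.mp x.2
      have h0 : ∑ y ∈ t, g y * (y : Fin (2*n) → ℝ) (j0 v) = 0 := by
        have := congrFun hsum (j0 v)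
        simpa [Finset.sum_apply] using this
      have h1 : ∑ y ∈ t, g y * (y : Fin (2*n) → ℝ) (j1 v) = 0 := by
        have := congrFun hsum (j1 v)
        simpa [Finset.sum_apply] using this
      have hdiff : ∑ y ∈ t, g y * ((y : Fin (2*n) → ℝ) (j0 v) - (y : Fin (2*n) → ℝ) (j1 v)) = 0 := by
        have : ∑ y ∈ t, (g y * (y : Fin (2*n) → ℝ) (j0 v) - g y * (y : Fin (2*n) → ℝ) (j1 v)) = 0 := by
          rw [Finset.sum_sub_distrib, h0, h1, sub_zero]
        simpa [mul_sub] using this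
      have hterm : ∀ y ∈ t, g y * ((y : Fin (2*n) → ℝ) (j0 v) - (y : Fin (2*n) → ℝ) (j1 v))
          = if y = x then 2 * g y else 0 := by
        intro y _
        obtain ⟨w, hw⟩ := Set.mem_range.mp y.2
        rw [← hw]
        by_cases hsw : sV N Ccol w = sV N Ccol v
        · have hyx : y = x := Subtype.ext (by rw [← hw, ← hv]; exact (hrows w v).mpr hsw)
          rw [if_pos hyx, hent w (j0 v), hent w (j1 v),
            if_pos ((hτ0 w v).mpr (le_of_eq hsw.symm)),
            if_neg (fun hc => absurd ((hτ1 w v).mp hc) (by omega))]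
          ring
        · have hyx : y ≠ x := by
            intro hcon
            exact hsw ((hrows w v).mp (by rw [hw, hcon, ← hv]))
          rw [if_neg hyx, hent w (j0 v), hent w (j1 v)]
          rcases lt_or_gt_of_ne hsw with h' | h'
          · rw [if_neg (fun hc => absurd ((hτ0 w v).mp hc) (by omega)),
              if_neg (fun hc => absurd ((hτ1 w v).mp hc) (by omega))]
            ring
          · rw [if_pos ((hτ0 w v).mpr (by omega)), if_pos ((hτ1 w v).mpr (by omega))]
            ring
      rw [Finset.sum_congr rfl hterm, Finset.sum_ite_eq' t x (fun y => 2 * g y), if_pos hx] at hdiff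
      linarith
    · intro v w
      exact (hrows v w).trans (hrowiff v w)
  -- the weight matrices
  refine ⟨2*n, (Matrix.of fun k j => (τ j)⁻¹ * φ0 (Pi.single k 1)),
    (Matrix.of fun k j => (τ j)⁻¹ * φ1 (Pi.single k 1)),
    (fun i => ((n:ℝ)+2) ^ (n * (i:ℕ))), _, rfl, ?_, ?_⟩ <;>
  · have hmulW : ∀ (φ : (Fin d → ℝ) →ₗ[ℝ] ℝ) (x : Fin n) (j : Fin (2*n)),
        (F * (Matrix.of fun k j => (τ j)⁻¹ * φ (Pi.single k 1))) x j
          = (τ j)⁻¹ * φ (F x) := by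
      intro φ x j
      rw [Matrix.mul_apply]
      calc ∑ k, F x k * ((τ j)⁻¹ * φ (Pi.single k 1))
          = (τ j)⁻¹ * ∑ k, F x k * φ (Pi.single k 1) := by
            rw [Finset.mul_sum]
            exact Finset.sum_congr rfl fun k _ => by ring
        _ = (τ j)⁻¹ * φ (F x) := by rw [lin_eval]
    have hX : ∀ (v : Fin n) (j : Fin (2*n)),
        (F * (Matrix.of fun k j => (τ j)⁻¹ * φ0 (Pi.single k 1))
          + ∑ i : Fin r, (((n:ℝ)+2) ^ (n * (i:ℕ))) •
            (A i * (F * (Matrix.of fun k j => (τ j)⁻¹ * φ1 (Pi.single k 1))))) v j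
          = (τ j)⁻¹ * ((sV N Ccol v : ℕ) : ℝ) := by
      intro v j
      rw [Matrix.add_apply, Matrix.sum_apply, hmulW φ0 v j, hval0 v]
      have hterm : ∀ i : Fin r,
          ((((n:ℝ)+2) ^ (n * (i:ℕ))) •
            (A i * (F * (Matrix.of fun k j => (τ j)⁻¹ * φ1 (Pi.single k 1))))) v j
          = (τ j)⁻¹ * ∑ u ∈ N i v, ((n:ℝ)+2) ^ (n*((i:ℕ)+1) + cI Ccol u) := by
        intro i
        rw [Matrix.smul_apply, smul_eq_mul, Matrix.mul_apply]
        have hu : ∀ u : Fin n, A i v u * (F * (Matrix.of fun k j => (τ j)⁻¹ * φ1 (Pi.single k 1))) u j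
            = if u ∈ N i v then (τ j)⁻¹ * ((n:ℝ)+2) ^ (n + cI Ccol u) else 0 := by
          intro u
          rw [hA, hmulW φ1 u j, hval1 u]
          split <;> ring
        rw [Finset.sum_congr rfl (fun u _ => hu u), Finset.sum_ite_mem, Finset.univ_inter,
          Finset.mul_sum, Finset.mul_sum]
        refine Finset.sum_congr rfl fun u _ => ?_
        rw [show n*((i:ℕ)+1) + cI Ccol u = n * (i:ℕ) + (n + cI Ccol u) by ring, pow_add]
        ring
      rw [Finset.sum_congr rfl (fun i _ => hterm i)]
      unfold sV
      push_cast
      rw [← Finset.mul_sum, ← mul_add]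
    have hent : ∀ (v : Fin n) (j : Fin (2*n)),
        (Matrix.of fun v j =>
          sgn ((F * (Matrix.of fun k j => (τ j)⁻¹ * φ0 (Pi.single k 1))
            + ∑ i : Fin r, (((n:ℝ)+2) ^ (n * (i:ℕ))) •
              (A i * (F * (Matrix.of fun k j => (τ j)⁻¹ * φ1 (Pi.single k 1))))) v j - 1)) v j
          = if τ j < ((sV N Ccol v : ℕ):ℝ) then 1 else -1 := by
      intro v j
      rw [Matrix.of_apply, hX v j]
      have hiff : (0 < (τ j)⁻¹ * ((sV N Ccol v : ℕ):ℝ) - 1) ↔ τ j < ((sV N Ccol v : ℕ):ℝ) := by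
        rw [sub_pos, inv_mul_eq_div]
        exact one_lt_div (hτpos j)
      rw [sgn, if_congr hiff rfl rfl]
    first
      | exact (key _ hent).1
      | exact (key _ hent).2
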